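/- (Dimension of the update component.) Assume Z_N has dimension N, U_M has dimension M, and β_{N,M} > 0. Then the subspace U_M ∩ Z_N^⊥ has dimension exactly M − N. -/

import Mathlib

open Submodule

/-- **Dimension of the update component.**
If `ZN` has dimension `N`, `UM` has dimension `M`, and the stability constant `β` is
positive (i.e. `β‖z‖ ≤ ‖Π z‖` on `ZN` with `Π` the orthogonal projection onto `UM`),
then `UM ⊓ ZNᗮ` has dimension exactly `M − N`. -/
theorem pbdw_update_component_dim
    {U : Type*} [NormedAddCommGroup U] [InnerProductSpace ℝ U] [CompleteSpace U]
    (ZN UM : Submodule ℝ U) [FiniteDimensional ℝ ZN] [FiniteDimensional ℝ UM]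
    (N M : ℕ) (hN : Module.finrank ℝ ZN = N) (hM : Module.finrank ℝ UM = M)
    (β : ℝ) (hβ : 0 < β)
    (hstab : ∀ z ∈ ZN, β * ‖z‖ ≤ ‖(orthogonalProjection UM z : U)‖) :
    Module.finrank ℝ ↥(UM ⊓ ZNᗮ) = M - N := by
  classical
  set f : UM →ₗ[ℝ] ZN :=
    ((orthogonalProjection ZN).toLinearMap).comp UM.subtype with hf
  have hker : LinearMap.ker f = ZNᗮ.comap UM.subtype := by
    ext u
    simp [hf, orthogonalProjection_eq_zero_iff]
  have hsurj : LinearMap.range f = ⊤ := by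
    by_contra h
    have horth : (LinearMap.range f)ᗮ ≠ ⊥ := by
      intro hb
      exact h ((Submodule.orthogonal_eq_bot_iff).mp hb)
    obtain ⟨z, hz_mem, hz_ne⟩ := Submodule.exists_mem_ne_zero_of_ne_bot horth
    have hzU : (z : U) ∈ UMᗮ := by
      intro u hu
      have h1 : (inner ℝ (f ⟨u, hu⟩) z : ℝ) = 0 := hz_mem (f ⟨u, hu⟩) ⟨⟨u, hu⟩, rfl⟩
      have h2 : (inner ℝ (f ⟨u, hu⟩ : U) (z : U) : ℝ) = 0 := h1
      have h3 : (inner ℝ ((orthogonalProjection ZN u : U)) (z : U) : ℝ) = 0 := h2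
      have h4 : (inner ℝ u ((orthogonalProjection ZN (z : U)) : U) : ℝ) = 0 := by
        have h5 := inner_starProjection_left_eq_right ZN u (z : U); simp only [starProjection_apply] at h5; rw [← h5]; exact h3
      rwa [orthogonalProjection_mem_subspace_eq_self z] at h4
    have hproj : orthogonalProjection UM (z : U) = 0 := by
      rwa [orthogonalProjection_eq_zero_iff]
    have := hstab (z : U) z.2
    rw [hproj] at this
    simp only [ZeroMemClass.coe_zero, norm_zero] at this
    have hz0 : ‖(z : U)‖ = 0 := by nlinarith [norm_nonneg (z : U)]
    exact hz_ne (by ext; simpa using norm_eq_zero.mp hz0)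
  have hrange : Module.finrank ℝ (LinearMap.range f) = N := by
    rw [hsurj, finrank_top, hN]
  have hrn := LinearMap.finrank_range_add_finrank_ker f
  rw [hrange, hM] at hrn
  have hkerdim : Module.finrank ℝ (LinearMap.ker f) = M - N := by omega
  have hcomap : ZNᗮ.comap UM.subtype = (UM ⊓ ZNᗮ).comap UM.subtype := by
    ext u
    simp [u.2]
  have e := Submodule.comapSubtypeEquivOfLe (inf_le_left : UM ⊓ ZNᗮ ≤ UM)
  rw [← LinearEquiv.finrank_eq e, ← hcomap, ← hker, hkerdim]
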